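/- Let f, g : F_2^N → {0,1} and ν : F_2^N → ℝ with E[ν] = 1, ⟨f*g, ν⟩ = 0, and m = max_{λ≠0} |ν̂(λ)|. If E[f]·E[g] = (m/(1+m))², then E[f] = E[g], and for every λ ≠ 0 with |ν̂(λ)| < m one has f̂(λ) = ĝ(λ) = 0. -/

import Mathlib

open Finset

/-- Expectation over the uniform measure on `F_2^N`. -/
noncomputable def fexp {N : ℕ} (f : (Fin N → ZMod 2) → ℝ) : ℝ :=
  (∑ x : Fin N → ZMod 2, f x) / 2 ^ N

/-- The character `(-1)^{λ·x}` on `F_2^N`. -/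
noncomputable def chr {N : ℕ} (l x : Fin N → ZMod 2) : ℝ :=
  if (∑ i, l i * x i : ZMod 2) = 0 then 1 else -1

/-- Fourier transform `f̂(λ) = E_x f(x)(-1)^{λ·x}`. -/
noncomputable def fhat {N : ℕ} (f : (Fin N → ZMod 2) → ℝ) (l : Fin N → ZMod 2) : ℝ :=
  (∑ x : Fin N → ZMod 2, f x * chr l x) / 2 ^ N

/-- Convolution `(f*g)(x) = E_y f(y) g(x-y)`. -/
noncomputable def conv {N : ℕ} (f g : (Fin N → ZMod 2) → ℝ) (x : Fin N → ZMod 2) : ℝ :=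
  (∑ y : Fin N → ZMod 2, f y * g (x - y)) / 2 ^ N

/-- Expectation inner product `⟨f, ν⟩ = E_x f(x) ν(x)`. -/
noncomputable def einner {N : ℕ} (f ν : (Fin N → ZMod 2) → ℝ) : ℝ :=
  (∑ x : Fin N → ZMod 2, f x * ν x) / 2 ^ N


section Aux

variable {N : ℕ}

lemma zmod2_em (a : ZMod 2) : a = 0 ∨ a = 1 := by revert a; decide

lemma chr_add_right (l x y : Fin N → ZMod 2) : chr l (x + y) = chr l x * chr l y := by
  unfold chr
  have h : (∑ i, l i * (x + y) i) = (∑ i, l i * x i) + (∑ i, l i * y i) := by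
    rw [← Finset.sum_add_distrib]
    exact Finset.sum_congr rfl fun i _ => by simp [mul_add]
  rw [h]
  rcases zmod2_em (∑ i, l i * x i) with h1 | h1 <;>
  rcases zmod2_em (∑ i, l i * y i) with h2 | h2 <;>
    rw [h1, h2] <;> norm_num <;> decide

lemma chr_add_left (a b x : Fin N → ZMod 2) : chr (a + b) x = chr a x * chr b x := by
  unfold chr
  have h : (∑ i, (a + b) i * x i) = (∑ i, a i * x i) + (∑ i, b i * x i) := by
    rw [← Finset.sum_add_distrib]
    exact Finset.sum_congr rfl fun i _ => by simp [add_mul]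
  rw [h]
  rcases zmod2_em (∑ i, a i * x i) with h1 | h1 <;>
  rcases zmod2_em (∑ i, b i * x i) with h2 | h2 <;>
    rw [h1, h2] <;> norm_num <;> decide

lemma chr_zero_left (x : Fin N → ZMod 2) : chr 0 x = 1 := by simp [chr]

lemma sum_chr (x : Fin N → ZMod 2) :
    ∑ l : Fin N → ZMod 2, chr l x = if x = 0 then (2 ^ N : ℝ) else 0 := by
  by_cases hx : x = 0
  · subst hx
    rw [if_pos rfl]
    have h1 : ∀ l : Fin N → ZMod 2, chr l 0 = 1 := by intro l; simp [chr]
    simp [h1, Finset.sum_const, Fintype.card_fun]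
  · rw [if_neg hx]
    obtain ⟨i, hi⟩ : ∃ i, x i ≠ 0 := by
      by_contra h; push_neg at h; exact hx (funext h)
    set e : Fin N → ZMod 2 := Pi.single i 1 with he_def
    have he : chr e x = -1 := by
      unfold chr
      have hs : (∑ j, e j * x j) = x i := by
        rw [Finset.sum_eq_single i]
        · simp [he_def]
        · intro j _ hj; simp [he_def, Pi.single_eq_of_ne hj]
        · intro h; exact absurd (Finset.mem_univ i) h
      rw [hs, if_neg hi]
    have key : ∑ l : Fin N → ZMod 2, chr (e + l) x = ∑ l : Fin N → ZMod 2, chr l x :=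
      Fintype.sum_equiv (Equiv.addLeft e) _ _ (fun l => rfl)
    have h2 : ∑ l : Fin N → ZMod 2, chr (e + l) x = -∑ l : Fin N → ZMod 2, chr l x := by
      rw [← Finset.sum_neg_distrib]
      exact Finset.sum_congr rfl fun l _ => by rw [chr_add_left, he]; ring
    linarith [key, h2]

lemma plancherel (h ν : (Fin N → ZMod 2) → ℝ) :
    ∑ l : Fin N → ZMod 2, fhat h l * fhat ν l = einner h ν := by
  unfold fhat einner
  have key : ∀ l : Fin N → ZMod 2,
      ((∑ x : Fin N → ZMod 2, h x * chr l x) / 2 ^ N) *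
        ((∑ y : Fin N → ZMod 2, ν y * chr l y) / 2 ^ N)
      = (∑ x : Fin N → ZMod 2, ∑ y : Fin N → ZMod 2, h x * ν y * chr l (x + y))
          / (2 ^ N * 2 ^ N) := by
    intro l
    rw [div_mul_div_comm, Finset.sum_mul_sum]
    congr 1
    refine Finset.sum_congr rfl fun x _ => Finset.sum_congr rfl fun y _ => ?_
    rw [chr_add_right]; ring
  calc ∑ l : Fin N → ZMod 2,
        ((∑ x : Fin N → ZMod 2, h x * chr l x) / 2 ^ N) *
          ((∑ y : Fin N → ZMod 2, ν y * chr l y) / 2 ^ N)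
      = ∑ l : Fin N → ZMod 2, (∑ x : Fin N → ZMod 2, ∑ y : Fin N → ZMod 2,
          h x * ν y * chr l (x + y)) / (2 ^ N * 2 ^ N) :=
        Finset.sum_congr rfl fun l _ => key l
    _ = (∑ x : Fin N → ZMod 2, ∑ y : Fin N → ZMod 2, h x * ν y *
          (∑ l : Fin N → ZMod 2, chr l (x + y))) / (2 ^ N * 2 ^ N) := by
        rw [← Finset.sum_div]
        congr 1
        rw [Finset.sum_comm]
        refine Finset.sum_congr rfl fun x _ => ?_
        rw [Finset.sum_comm]
        refine Finset.sum_congr rfl fun y _ => ?_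
        rw [Finset.mul_sum]
    _ = (∑ x : Fin N → ZMod 2, h x * ν x * 2 ^ N) / (2 ^ N * 2 ^ N) := by
        congr 1
        refine Finset.sum_congr rfl fun x _ => ?_
        have hx : ∀ y : Fin N → ZMod 2, x + y = 0 ↔ y = x := by
          intro y
          constructor
          · intro h'
            funext i
            have := congrFun h' i
            have h2 : ∀ a b : ZMod 2, a + b = 0 → b = a := by decide
            exact h2 _ _ this
          · intro h'; subst h'
            funext i
            have h2 : ∀ a : ZMod 2, a + a = 0 := by decide
            exact h2 (y i)
        calc ∑ y : Fin N → ZMod 2, h x * ν y * (∑ l : Fin N → ZMod 2, chr l (x + y))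
            = ∑ y : Fin N → ZMod 2, (if y = x then h x * ν y * 2 ^ N else 0) := by
              refine Finset.sum_congr rfl fun y _ => ?_
              rw [sum_chr]
              by_cases hy : y = x
              · rw [if_pos ((hx y).mpr hy), if_pos hy]
              · rw [if_neg (fun hc => hy ((hx y).mp hc)), if_neg hy, mul_zero]
          _ = h x * ν x * 2 ^ N := by rw [Finset.sum_ite_eq' Finset.univ x _]; simp
    _ = (∑ x : Fin N → ZMod 2, h x * ν x) / 2 ^ N := by
        rw [← Finset.sum_mul]
        have : (2:ℝ)^N ≠ 0 := by positivity
        field_simp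

lemma conv_fhat (f g : (Fin N → ZMod 2) → ℝ) (l : Fin N → ZMod 2) :
    fhat (conv f g) l = fhat f l * fhat g l := by
  unfold fhat conv
  have key : ∀ x : Fin N → ZMod 2,
      ((∑ y : Fin N → ZMod 2, f y * g (x - y)) / 2 ^ N) * chr l x
        = (∑ y : Fin N → ZMod 2, f y * g (x - y) * chr l x) / 2 ^ N := by
    intro x; rw [div_mul_eq_mul_div, Finset.sum_mul]
  calc (∑ x : Fin N → ZMod 2, ((∑ y : Fin N → ZMod 2, f y * g (x - y)) / 2 ^ N) * chr l x) / 2 ^ N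
      = ((∑ x : Fin N → ZMod 2, ∑ y : Fin N → ZMod 2, f y * g (x - y) * chr l x) / 2 ^ N) / 2 ^ N := by
        rw [Finset.sum_congr rfl fun x _ => key x, ← Finset.sum_div]
    _ = ((∑ y : Fin N → ZMod 2, (f y * chr l y) *
          (∑ z : Fin N → ZMod 2, g z * chr l z)) / 2 ^ N) / 2 ^ N := by
        congr 2
        rw [Finset.sum_comm]
        refine Finset.sum_congr rfl fun y _ => ?_
        have reindex : ∑ z : Fin N → ZMod 2, f y * g z * (chr l z * chr l y)
            = ∑ x : Fin N → ZMod 2, f y * g (x - y) * chr l x := by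
          refine Fintype.sum_equiv (Equiv.addRight y) _ _ fun z => ?_
          simp only [Equiv.coe_addRight, add_sub_cancel_right]
          rw [chr_add_right]
        rw [← reindex, Finset.mul_sum]
        refine Finset.sum_congr rfl fun z _ => by ring
    _ = _ := by
        rw [← Finset.sum_mul]
        field_simp

lemma fhat_zero (f : (Fin N → ZMod 2) → ℝ) : fhat f 0 = fexp f := by
  unfold fhat fexp
  congr 1
  exact Finset.sum_congr rfl fun x _ => by rw [chr_zero_left, mul_one]

lemma parseval (f : (Fin N → ZMod 2) → ℝ) (hf : ∀ x, f x = 0 ∨ f x = 1) :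
    ∑ l : Fin N → ZMod 2, (fhat f l) ^ 2 = fexp f := by
  have h1 : ∑ l : Fin N → ZMod 2, fhat f l * fhat f l = einner f f := plancherel f f
  have h2 : einner f f = fexp f := by
    unfold einner fexp
    congr 1
    refine Finset.sum_congr rfl fun x _ => ?_
    rcases hf x with h | h <;> rw [h] <;> norm_num
  calc ∑ l : Fin N → ZMod 2, (fhat f l) ^ 2
      = ∑ l : Fin N → ZMod 2, fhat f l * fhat f l :=
        Finset.sum_congr rfl fun l _ => sq (fhat f l) ▸ by ring
    _ = fexp f := h1.trans h2

lemma fexp_pos (f : (Fin N → ZMod 2) → ℝ) (hf : ∀ x, f x = 0 ∨ f x = 1)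
    (hf0 : ∃ x, f x ≠ 0) : 0 < fexp f := by
  obtain ⟨x₀, hx₀⟩ := hf0
  have h1 : f x₀ = 1 := (hf x₀).resolve_left hx₀
  have h2 : ∀ x ∈ Finset.univ, 0 ≤ f x := fun x _ => by rcases hf x with h | h <;> rw [h] <;> norm_num
  have h3 : (1:ℝ) ≤ ∑ x : Fin N → ZMod 2, f x := h1 ▸ Finset.single_le_sum h2 (Finset.mem_univ x₀)
  unfold fexp
  positivity

end Aux

/-- Equality case of the weighted Hoffman bound. -/
theorem hoffman_equality {N : ℕ} (f g ν : (Fin N → ZMod 2) → ℝ)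
    (hf : ∀ x, f x = 0 ∨ f x = 1) (hg : ∀ x, g x = 0 ∨ g x = 1)
    (hf0 : ∃ x, f x ≠ 0) (hg0 : ∃ x, g x ≠ 0)
    (hν : fexp ν = 1) (horth : einner (conv f g) ν = 0)
    (m : ℝ)
    (hm : IsGreatest {r : ℝ | ∃ l : Fin N → ZMod 2, l ≠ 0 ∧ r = |fhat ν l|} m)
    (heq : fexp f * fexp g = (m / (1 + m)) ^ 2) :
    fexp f = fexp g ∧
      ∀ l : Fin N → ZMod 2, l ≠ 0 → |fhat ν l| < m → fhat f l = 0 ∧ fhat g l = 0 := by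
  classical
  set α := fexp f with hα
  set β := fexp g with hβ
  have hαpos : 0 < α := fexp_pos f hf hf0
  have hβpos : 0 < β := fexp_pos g hg hg0
  obtain ⟨⟨l₀, hl₀, hml₀⟩, hub⟩ := hm
  have hm0 : 0 ≤ m := hml₀ ▸ abs_nonneg _
  have hmpos : 0 < m := by
    rcases lt_or_eq_of_le hm0 with h | h
    · exact h
    · exfalso
      rw [← h] at heq
      norm_num at heq
      rcases heq with h' | h' <;> linarith
  set s := m / (1 + m) with hs
  have h1m : (0:ℝ) < 1 + m := by linarith
  have hspos : 0 < s := div_pos hmpos h1m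
  have hs1 : s < 1 := by rw [hs, div_lt_one h1m]; linarith
  have hms : m * (1 - s) = s := by
    rw [hs]; field_simp; ring
  have hαβ : α * β = s ^ 2 := heq
  -- Fourier expansion of the orthogonality relation
  have hν0 : fhat ν 0 = 1 := by rw [fhat_zero]; exact hν
  have hor : ∑ l : Fin N → ZMod 2, fhat f l * fhat g l * fhat ν l = 0 := by
    calc ∑ l : Fin N → ZMod 2, fhat f l * fhat g l * fhat ν l
        = ∑ l : Fin N → ZMod 2, fhat (conv f g) l * fhat ν l :=
          Finset.sum_congr rfl fun l _ => by rw [conv_fhat]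
      _ = einner (conv f g) ν := plancherel _ _
      _ = 0 := horth
  set T : Finset (Fin N → ZMod 2) := Finset.univ.erase 0 with hT
  have hsplit : ∀ F : (Fin N → ZMod 2) → ℝ,
      ∑ l : Fin N → ZMod 2, F l = F 0 + ∑ l ∈ T, F l := fun F =>
    (Finset.add_sum_erase _ F (Finset.mem_univ 0)).symm
  have hP : ∑ l ∈ T, fhat f l * fhat g l * fhat ν l = -(α * β) := by
    have h := hor
    rw [hsplit, fhat_zero, fhat_zero, hν0, ← hα, ← hβ, mul_one] at h
    linarith
  have hA : ∑ l ∈ T, (fhat f l) ^ 2 = α - α ^ 2 := by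
    have h := parseval f hf
    rw [hsplit, fhat_zero, ← hα] at h
    linarith
  have hB : ∑ l ∈ T, (fhat g l) ^ 2 = β - β ^ 2 := by
    have h := parseval g hg
    rw [hsplit, fhat_zero, ← hβ] at h
    linarith
  set U := ∑ l ∈ T, |fhat f l| * |fhat g l| with hUdef
  set Q := ∑ l ∈ T, |fhat f l| * |fhat g l| * |fhat ν l| with hQdef
  have hUnn : 0 ≤ U := Finset.sum_nonneg fun l _ => mul_nonneg (abs_nonneg _) (abs_nonneg _)
  have hbd : ∀ l ∈ T, |fhat ν l| ≤ m := fun l hl =>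
    hub ⟨l, (Finset.mem_erase.mp hl).1, rfl⟩
  have h1 : α * β ≤ Q := by
    have key : -(∑ l ∈ T, fhat f l * fhat g l * fhat ν l) ≤ Q := by
      rw [← Finset.sum_neg_distrib]
      refine Finset.sum_le_sum fun l _ => ?_
      calc -(fhat f l * fhat g l * fhat ν l) ≤ |fhat f l * fhat g l * fhat ν l| :=
            neg_le_abs _
        _ = |fhat f l| * |fhat g l| * |fhat ν l| := by rw [abs_mul, abs_mul]
    rw [hP] at key; linarith
  have h2 : Q ≤ m * U := by
    rw [hUdef, Finset.mul_sum, hQdef]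
    refine Finset.sum_le_sum fun l hl => ?_
    have h0 : 0 ≤ |fhat f l| * |fhat g l| := mul_nonneg (abs_nonneg _) (abs_nonneg _)
    calc |fhat f l| * |fhat g l| * |fhat ν l| ≤ |fhat f l| * |fhat g l| * m :=
          mul_le_mul_of_nonneg_left (hbd l hl) h0
      _ = m * (|fhat f l| * |fhat g l|) := by ring
  have hCS : U ^ 2 ≤ (α - α ^ 2) * (β - β ^ 2) := by
    have h := Finset.sum_mul_sq_le_sq_mul_sq T (fun l => |fhat f l|) (fun l => |fhat g l|)
    simp only [sq_abs] at h
    rw [hA, hB] at h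
    exact h
  have hc1 : α * β ≤ m * U := le_trans h1 h2
  -- AM-GM step
  have hsum : 2 * s ≤ α + β := by
    nlinarith [sq_nonneg (α - β), hαβ, hαpos, hβpos, hspos]
  -- product bound
  have hABle : (α - α ^ 2) * (β - β ^ 2) ≤ s ^ 2 * (1 - s) ^ 2 := by
    have e1 : (α - α ^ 2) * (β - β ^ 2) = α * β * (1 - α - β + α * β) := by ring
    rw [e1, hαβ]
    nlinarith [hsum, sq_nonneg s]
  -- m * U = s ^ 2
  have k1 : m ^ 2 * (U ^ 2) ≤ m ^ 2 * ((α - α ^ 2) * (β - β ^ 2)) :=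
    mul_le_mul_of_nonneg_left hCS (sq_nonneg m)
  have hmU2 : (m * U) ^ 2 ≤ s ^ 4 := by
    have k2 : m ^ 2 * ((α - α ^ 2) * (β - β ^ 2)) ≤ m ^ 2 * (s ^ 2 * (1 - s) ^ 2) :=
      mul_le_mul_of_nonneg_left hABle (sq_nonneg m)
    have e2 : m ^ 2 * (s ^ 2 * (1 - s) ^ 2) = s ^ 2 * (m * (1 - s)) ^ 2 := by ring
    rw [e2, hms] at k2
    calc (m * U) ^ 2 = m ^ 2 * (U ^ 2) := by ring
      _ ≤ s ^ 2 * s ^ 2 := le_trans k1 k2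
      _ = s ^ 4 := by ring
  have hmU : m * U = s ^ 2 := by
    have hge : s ^ 2 ≤ m * U := hαβ ▸ hc1
    have hs2 : 0 < s ^ 2 := pow_pos hspos 2
    have h4 : (m * U - s ^ 2) * (m * U + s ^ 2) ≤ 0 := by
      have e : (m * U - s ^ 2) * (m * U + s ^ 2) = (m * U) ^ 2 - s ^ 4 := by ring
      linarith [hmU2, e.le, e.ge]
    have h5 : 0 < m * U + s ^ 2 := by linarith
    by_contra hne
    have hlt : 0 < m * U - s ^ 2 := by
      rcases lt_trichotomy (m * U) (s ^ 2) with h' | h' | h'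
      · linarith
      · exact absurd h' hne
      · linarith
    exact absurd h4 (not_le.mpr (mul_pos hlt h5))
  -- α + β = 2s
  have hsumeq : α + β = 2 * s := by
    have e0 : m ^ 2 * (U ^ 2) = s ^ 4 := by
      calc m ^ 2 * (U ^ 2) = (m * U) ^ 2 := by ring
        _ = (s ^ 2) ^ 2 := by rw [hmU]
        _ = s ^ 4 := by ring
    have key : s ^ 4 ≤ m ^ 2 * ((α - α ^ 2) * (β - β ^ 2)) := e0 ▸ k1
    have e1 : m ^ 2 * ((α - α ^ 2) * (β - β ^ 2)) = m ^ 2 * s ^ 2 * (1 - α - β + s ^ 2) := by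
      have e1' : (α - α ^ 2) * (β - β ^ 2) = α * β * (1 - α - β + α * β) := by ring
      rw [e1', hαβ]; ring
    have e2 : s ^ 4 = m ^ 2 * s ^ 2 * (1 - 2 * s + s ^ 2) := by
      have e2' : m ^ 2 * s ^ 2 * (1 - 2 * s + s ^ 2) = s ^ 2 * (m * (1 - s)) ^ 2 := by ring
      rw [e2', hms]; ring
    rw [e1, e2] at key
    have hms2 : 0 < m ^ 2 * s ^ 2 := by positivity
    have hle2 := (mul_le_mul_iff_right₀ hms2).mp key
    linarith
  have hαβeq : α = β := by
    have h0 : (α - β) ^ 2 = 0 := by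
      linear_combination (α + β + 2 * s) * hsumeq - 4 * hαβ
    have := pow_eq_zero_iff (n := 2) (by norm_num) |>.mp h0
    linarith [sub_eq_zero.mp this]
  have hαs : α = s := by linarith
  have hβs : β = s := by linarith
  -- value of U
  have hUval : U = s - s ^ 2 := by
    have e3 : m * (s - s ^ 2) = s ^ 2 := by linear_combination s * hms
    have := hmU.trans e3.symm
    exact mul_left_cancel₀ hmpos.ne' this
  have hAval : ∑ l ∈ T, (fhat f l) ^ 2 = s - s ^ 2 := by rw [hA, hαs]
  have hBval : ∑ l ∈ T, (fhat g l) ^ 2 = s - s ^ 2 := by rw [hB, hβs]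
  -- Cauchy-Schwarz equality : |f̂| = |ĝ| on T
  have hzero : ∑ l ∈ T, (|fhat f l| - |fhat g l|) ^ 2 = 0 := by
    have expand : ∑ l ∈ T, (|fhat f l| - |fhat g l|) ^ 2
        = (∑ l ∈ T, (fhat f l) ^ 2) + (∑ l ∈ T, (fhat g l) ^ 2) - 2 * U := by
      rw [hUdef, Finset.mul_sum, ← Finset.sum_add_distrib, ← Finset.sum_sub_distrib]
      refine Finset.sum_congr rfl fun l _ => ?_
      rw [sub_sq, sq_abs, sq_abs]
      ring
    rw [expand, hAval, hBval, hUval]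
    ring
  have habs : ∀ l ∈ T, |fhat f l| = |fhat g l| := by
    intro l hl
    have h0 := (Finset.sum_eq_zero_iff_of_nonneg fun l _ => sq_nonneg _).mp hzero l hl
    have h1 := pow_eq_zero_iff (n := 2) (by norm_num) |>.mp h0
    linarith [sub_eq_zero.mp h1]
  -- saturation of the |ν̂| ≤ m bound
  have hQeq : Q = m * U := le_antisymm h2 (by rw [hmU, ← hαβ]; exact h1)
  have hterm : ∀ l ∈ T, |fhat f l| * |fhat g l| * (m - |fhat ν l|) = 0 := by
    have hsum0 : ∑ l ∈ T, |fhat f l| * |fhat g l| * (m - |fhat ν l|) = 0 := by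
      have e4 : ∑ l ∈ T, |fhat f l| * |fhat g l| * (m - |fhat ν l|) = m * U - Q := by
        rw [hUdef, hQdef, Finset.mul_sum, ← Finset.sum_sub_distrib]
        exact Finset.sum_congr rfl fun l _ => by ring
      rw [e4, hQeq]; ring
    intro l hl
    exact (Finset.sum_eq_zero_iff_of_nonneg fun l hl =>
      mul_nonneg (mul_nonneg (abs_nonneg _) (abs_nonneg _))
        (sub_nonneg.mpr (hbd l hl))).mp hsum0 l hl
  refine ⟨hαβeq, ?_⟩
  intro l hl hlt
  have hlT : l ∈ T := Finset.mem_erase.mpr ⟨hl, Finset.mem_univ l⟩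
  have h0 : |fhat f l| * |fhat g l| = 0 := by
    rcases mul_eq_zero.mp (hterm l hlT) with h | h
    · exact h
    · exfalso; linarith [sub_eq_zero.mp h]
  have heqabs := habs l hlT
  have hf0' : |fhat f l| = 0 := by
    rcases mul_eq_zero.mp h0 with h | h
    · exact h
    · rw [heqabs]; exact h
  exact ⟨abs_eq_zero.mp hf0', abs_eq_zero.mp (heqabs ▸ hf0')⟩
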